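/- The expected value of the Some-to-Some estimator is a lower bound on the marginal log-likelihood: E_{Φ}[(1/S)∑_{s∈Φ} E_{z ∼ q_{φ_s}}[log(p(x,z)/((1/S)∑_{k∈Φ} q_{φ_k}(z|x)))]] ≤ log p(x). -/

import Mathlib

open MeasureTheory Finset

lemma elbo_aux {Z : Type*} [MeasurableSpace Z] (μ : Measure Z)
    (p q : Z → ℝ) (hp : ∀ z, 0 < p z) (hq : ∀ z, 0 < q z)
    (hpInt : Integrable p μ) (hqInt : Integrable q μ)
    (hq1 : ∫ z, q z ∂μ = 1)
    (hInt : Integrable (fun z => q z * Real.log (p z / q z)) μ) :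
    ∫ z, q z * Real.log (p z / q z) ∂μ ≤ Real.log (∫ z, p z ∂μ) := by
  have hμ : μ ≠ 0 := by
    rintro rfl
    simp at hq1
  have hI : 0 < ∫ z, p z ∂μ := by
    rw [integral_pos_iff_support_of_nonneg (fun z => (hp z).le) hpInt]
    have : Function.support p = Set.univ := by
      ext z; simp [(hp z).ne']
    rw [this]
    exact Measure.measure_univ_pos.mpr hμ
  set I := ∫ z, p z ∂μ with hIdef
  have hpt : ∀ z, q z * Real.log (p z / q z) ≤ p z / I - q z + q z * Real.log I := by
    intro z
    have h1 : Real.log (p z / q z) = Real.log (p z / (q z * I)) + Real.log I := by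
      rw [Real.log_div (hp z).ne' (mul_pos (hq z) hI).ne', Real.log_mul (hq z).ne' hI.ne',
        Real.log_div (hp z).ne' (hq z).ne']
      ring
    have h2 : Real.log (p z / (q z * I)) ≤ p z / (q z * I) - 1 :=
      Real.log_le_sub_one_of_pos (div_pos (hp z) (mul_pos (hq z) hI))
    have h3 : q z * (p z / (q z * I) - 1) = p z / I - q z := by
      field_simp [(hq z).ne', hI.ne']
    calc q z * Real.log (p z / q z)
        = q z * Real.log (p z / (q z * I)) + q z * Real.log I := by rw [h1]; ring
      _ ≤ q z * (p z / (q z * I) - 1) + q z * Real.log I := by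
          have := mul_le_mul_of_nonneg_left h2 (hq z).le
          linarith
      _ = p z / I - q z + q z * Real.log I := by rw [h3]
  have e1 : Integrable (fun z => p z / I - q z) μ := (hpInt.div_const I).sub hqInt
  have e2 : Integrable (fun z => q z * Real.log I) μ := hqInt.mul_const _
  have hRInt : Integrable (fun z => p z / I - q z + q z * Real.log I) μ := e1.add e2
  have := integral_mono hInt hRInt hpt
  calc ∫ z, q z * Real.log (p z / q z) ∂μ
      ≤ ∫ z, (p z / I - q z + q z * Real.log I) ∂μ := this
    _ = Real.log I := by
        rw [integral_add e1 e2, integral_sub (hpInt.div_const I) hqInt, integral_div,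
          integral_mul_const, hq1, ← hIdef, div_self hI.ne']
        ring

/-- The expected value of the Some-to-Some estimator is a lower bound on the
marginal log-likelihood. -/
theorem s2s_expectation_le_log_marginal
    {Z : Type*} [MeasurableSpace Z] (μ : Measure Z) [SigmaFinite μ]
    (A S : ℕ) (hS : 1 ≤ S) (hSA : S ≤ A)
    (p : Z → ℝ) (hp : ∀ z, 0 < p z) (hpInt : Integrable p μ)
    (q : Fin A → Z → ℝ)
    (hq0 : ∀ a z, 0 < q a z) (hq1 : ∀ a, ∫ z, q a z ∂μ = 1)
    (hIntA : ∀ a, Integrable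
      (fun z => q a z * Real.log (p z / ((1 / (A : ℝ)) * ∑ a', q a' z))) μ)
    (hIntS : ∀ Φ ∈ Finset.powersetCard S (Finset.univ : Finset (Fin A)), ∀ s,
      Integrable
        (fun z => q s z * Real.log (p z / ((1 / (S : ℝ)) * ∑ k ∈ Φ, q k z))) μ) :
    ∑ Φ ∈ Finset.powersetCard S (Finset.univ : Finset (Fin A)),
        (1 / (A.choose S : ℝ)) * ((1 / (S : ℝ)) *
          ∑ s ∈ Φ, ∫ z, q s z * Real.log (p z / ((1 / (S : ℝ)) * ∑ k ∈ Φ, q k z)) ∂μ)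
      ≤ Real.log (∫ z, p z ∂μ) := by
  have hS0 : (0 : ℝ) < S := by exact_mod_cast hS
  have hqInt : ∀ a, Integrable (q a) μ := by
    intro a
    by_contra h
    have := hq1 a
    rw [integral_undef h] at this
    norm_num at this
  have bound : ∀ Φ ∈ Finset.powersetCard S (Finset.univ : Finset (Fin A)),
      (1 / (S : ℝ)) * ∑ s ∈ Φ, ∫ z, q s z * Real.log (p z / ((1 / (S : ℝ)) * ∑ k ∈ Φ, q k z)) ∂μ
        ≤ Real.log (∫ z, p z ∂μ) := by
    intro Φ hΦ
    have hcard : Φ.card = S := (Finset.mem_powersetCard_univ.mp hΦ)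
    have hne : Φ.Nonempty := Finset.card_pos.mp (by omega)
    set qb : Z → ℝ := fun z => (1 / (S : ℝ)) * ∑ k ∈ Φ, q k z with hqbdef
    have hqb0 : ∀ z, 0 < qb z := fun z =>
      mul_pos (by positivity) (Finset.sum_pos (fun k _ => hq0 k z) hne)
    have hqbInt : Integrable qb μ :=
      (integrable_finset_sum Φ fun k _ => hqInt k).const_mul _
    have hqb1 : ∫ z, qb z ∂μ = 1 := by
      simp only [hqbdef]
      rw [integral_const_mul, integral_finset_sum Φ (fun k _ => hqInt k)]
      simp only [hq1]
      rw [Finset.sum_const, hcard, nsmul_eq_mul]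
      field_simp
    have heq : (fun z => qb z * Real.log (p z / qb z))
        = fun z => (1 / (S : ℝ)) * ∑ s ∈ Φ, q s z * Real.log (p z / qb z) := by
      funext z
      rw [← Finset.sum_mul]
      simp only [hqbdef]
      ring
    have hqbLogInt : Integrable (fun z => qb z * Real.log (p z / qb z)) μ := by
      rw [heq]
      exact (integrable_finset_sum Φ fun s _ => hIntS Φ hΦ s).const_mul _
    have key : (1 / (S : ℝ)) * ∑ s ∈ Φ, ∫ z, q s z * Real.log (p z / qb z) ∂μ
        = ∫ z, qb z * Real.log (p z / qb z) ∂μ := by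
      rw [heq, integral_const_mul, integral_finset_sum Φ (fun s _ => hIntS Φ hΦ s)]
    rw [key]
    exact elbo_aux μ p qb hp hqb0 hpInt hqbInt hqb1 hqbLogInt
  have hC : (0 : ℝ) < (A.choose S : ℝ) := by exact_mod_cast Nat.choose_pos hSA
  calc ∑ Φ ∈ Finset.powersetCard S (Finset.univ : Finset (Fin A)),
        (1 / (A.choose S : ℝ)) * ((1 / (S : ℝ)) *
          ∑ s ∈ Φ, ∫ z, q s z * Real.log (p z / ((1 / (S : ℝ)) * ∑ k ∈ Φ, q k z)) ∂μ)
      ≤ ∑ Φ ∈ Finset.powersetCard S (Finset.univ : Finset (Fin A)),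
        (1 / (A.choose S : ℝ)) * Real.log (∫ z, p z ∂μ) :=
        Finset.sum_le_sum fun Φ hΦ =>
          mul_le_mul_of_nonneg_left (bound Φ hΦ) (by positivity)
    _ = Real.log (∫ z, p z ∂μ) := by
        rw [Finset.sum_const, Finset.card_powersetCard, Finset.card_univ, Fintype.card_fin,
          nsmul_eq_mul]
        field_simp
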